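/- Let δ > 0 and set s_j := 2^{((1+2δ)/(2+2δ))·j} for j ∈ ℕ. Then there exist constants c₁, c₂ > 0 and j₀ ∈ ℕ such that for all j ≥ j₀: c₁ · 2^{−j} ≤ ( ∑_{m∈ℤ²∖{0}} |m|^{−(4+2δ)} ) · ( ∑_{n∈ℤ², 2^{j−1}/s_j ≤ |n| ≤ 2^{j+1}/s_j} |n|^{−(4+2δ)} ) ≤ c₂ · 2^{−j}. -/
import Mathlib


noncomputable section

/-- The lattice point `m ∈ ℤ²` viewed as a vector in `ℝ²`. -/
def intVec (m : ℤ × ℤ) : EuclideanSpace ℝ (Fin 2) :=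
  (WithLp.equiv 2 (Fin 2 → ℝ)).symm ![(m.1 : ℝ), (m.2 : ℝ)]

lemma intVec_norm (m : ℤ × ℤ) :
    ‖intVec m‖ = Real.sqrt ((m.1 : ℝ) ^ 2 + (m.2 : ℝ) ^ 2) := by
  rw [intVec, EuclideanSpace.norm_eq]
  congr 1
  rw [Fin.sum_univ_two]
  simp [Real.norm_eq_abs, sq_abs]

lemma abs_fst_le (m : ℤ × ℤ) : |(m.1 : ℝ)| ≤ ‖intVec m‖ := by
  rw [intVec_norm, ← Real.sqrt_sq_eq_abs]
  exact Real.sqrt_le_sqrt (by nlinarith [sq_nonneg ((m.2 : ℝ))])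

lemma abs_snd_le (m : ℤ × ℤ) : |(m.2 : ℝ)| ≤ ‖intVec m‖ := by
  rw [intVec_norm, ← Real.sqrt_sq_eq_abs]
  exact Real.sqrt_le_sqrt (by nlinarith [sq_nonneg ((m.1 : ℝ))])

lemma summable_lattice (p : ℝ) (hp : 2 < p) :
    Summable (fun m : ℤ × ℤ =>
      Set.indicator {m : ℤ × ℤ | m ≠ 0} (fun m => ‖intVec m‖ ^ (-p)) m) := by
  have h := EisensteinSeries.summable_one_div_norm_rpow hp
  have h2 : Summable (fun m : ℤ × ℤ => ‖(![m.1, m.2] : Fin 2 → ℤ)‖ ^ (-p)) := by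
    have := ((finTwoArrowEquiv ℤ).symm.summable_iff
      (f := fun x : Fin 2 → ℤ => ‖x‖ ^ (-p))).mpr h
    simpa [finTwoArrowEquiv, Function.comp_def] using this
  refine h2.of_nonneg_of_le (fun m => Set.indicator_nonneg
    (fun m _ => Real.rpow_nonneg (norm_nonneg _) _) m) (fun m => ?_)
  by_cases hm : m ∈ {m : ℤ × ℤ | m ≠ 0}
  · rw [Set.indicator_of_mem hm]
    have hx : (![m.1, m.2] : Fin 2 → ℤ) ≠ 0 := by
      intro h0
      apply hm
      have h1 := congrFun h0 0
      have h2 := congrFun h0 1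
      simp at h1 h2
      exact Prod.ext h1 h2
    have hpos : (0 : ℝ) < ‖(![m.1, m.2] : Fin 2 → ℤ)‖ := norm_pos_iff.mpr hx
    refine Real.rpow_le_rpow_of_nonpos hpos ?_ (by linarith)
    rw [EisensteinSeries.norm_eq_max_natAbs]
    simp only [Matrix.cons_val_zero, Matrix.cons_val_one, Matrix.head_cons]
    rw [Nat.cast_max]
    refine max_le ?_ ?_
    · rw [Nat.cast_natAbs, Int.cast_abs]; exact abs_fst_le m
    · rw [Nat.cast_natAbs, Int.cast_abs]; exact abs_snd_le m
  · rw [Set.indicator_of_notMem hm]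
    positivity

set_option maxHeartbeats 1000000 in
/-- Energy matching for power-law coefficients: with `s_j = 2^{((1+2δ)/(2+2δ)) j}`,
the product of lattice sums is comparable to `2^{-j}`. -/
theorem energy_matching_power_law (δ : ℝ) (hδ : 0 < δ) :
    ∃ c₁ > (0 : ℝ), ∃ c₂ > (0 : ℝ), ∃ j₀ : ℕ, ∀ j : ℕ, j₀ ≤ j →
      c₁ * (2 : ℝ) ^ (-(j : ℝ)) ≤
          (∑' m : ℤ × ℤ,
              Set.indicator {m : ℤ × ℤ | m ≠ 0}
                (fun m => ‖intVec m‖ ^ (-(4 + 2 * δ))) m) *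
            (∑' n : ℤ × ℤ,
              Set.indicator {n : ℤ × ℤ |
                  (2 : ℝ) ^ ((j : ℝ) - 1) / (2 : ℝ) ^ (((1 + 2 * δ) / (2 + 2 * δ)) * (j : ℝ)) ≤
                    ‖intVec n‖ ∧
                  ‖intVec n‖ ≤
                    (2 : ℝ) ^ ((j : ℝ) + 1) / (2 : ℝ) ^ (((1 + 2 * δ) / (2 + 2 * δ)) * (j : ℝ))}
                (fun n => ‖intVec n‖ ^ (-(4 + 2 * δ))) n) ∧
        (∑' m : ℤ × ℤ,
              Set.indicator {m : ℤ × ℤ | m ≠ 0}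
                (fun m => ‖intVec m‖ ^ (-(4 + 2 * δ))) m) *
            (∑' n : ℤ × ℤ,
              Set.indicator {n : ℤ × ℤ |
                  (2 : ℝ) ^ ((j : ℝ) - 1) / (2 : ℝ) ^ (((1 + 2 * δ) / (2 + 2 * δ)) * (j : ℝ)) ≤
                    ‖intVec n‖ ∧
                  ‖intVec n‖ ≤
                    (2 : ℝ) ^ ((j : ℝ) + 1) / (2 : ℝ) ^ (((1 + 2 * δ) / (2 + 2 * δ)) * (j : ℝ))}
                (fun n => ‖intVec n‖ ^ (-(4 + 2 * δ))) n) ≤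
          c₂ * (2 : ℝ) ^ (-(j : ℝ)) := by
  have h2δ : (0:ℝ) < 2 + 2 * δ := by linarith
  set p : ℝ := 4 + 2 * δ with hp_def
  have hp2 : (2:ℝ) < p := by rw [hp_def]; linarith
  have hp0 : (0:ℝ) < p := by linarith
  have hS : Summable (fun m : ℤ × ℤ =>
      Set.indicator {m : ℤ × ℤ | m ≠ 0} (fun m => ‖intVec m‖ ^ (-p)) m) :=
    summable_lattice p hp2
  set S : ℝ := ∑' m : ℤ × ℤ,
      Set.indicator {m : ℤ × ℤ | m ≠ 0} (fun m => ‖intVec m‖ ^ (-p)) m with hS_def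
  have hS1 : 1 ≤ S := by
    have hval : Set.indicator {m : ℤ × ℤ | m ≠ 0}
        (fun m => ‖intVec m‖ ^ (-p)) ((1 : ℤ), (0 : ℤ)) = 1 := by
      rw [Set.indicator_of_mem (by simp [Set.mem_setOf_eq, Prod.ext_iff] :
        ((1:ℤ),(0:ℤ)) ∈ {m : ℤ × ℤ | m ≠ 0})]
      rw [intVec_norm]
      norm_num
    have := Summable.le_tsum hS ((1:ℤ), (0:ℤ)) (fun b _ => Set.indicator_nonneg
      (fun m _ => Real.rpow_nonneg (norm_nonneg _) _) b)
    rw [hval] at this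
    exact this
  have hSpos : (0:ℝ) < S := by linarith
  clear_value S
  refine ⟨S * ((4:ℝ) ^ (-p) * (2:ℝ) ^ ((2:ℝ) + 2*δ)), by positivity,
    S * (121 * (2:ℝ) ^ ((2:ℝ) + 2*δ)), by positivity, ⌈3 * (2 + 2*δ)⌉₊, ?_⟩
  intro j hj
  have hj3 : 3 * (2 + 2*δ) ≤ (j:ℝ) := le_trans (Nat.le_ceil _) (by exact_mod_cast hj)
  set E : ℝ := (j:ℝ)/(2+2*δ) - 1 with hE_def
  have hE2 : (2:ℝ) ≤ E := by
    have h3 : (3:ℝ) ≤ (j:ℝ)/(2+2*δ) := (le_div_iff₀ h2δ).mpr (by linarith)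
    rw [hE_def]; linarith
  set r : ℝ := (2:ℝ) ^ E with hr_def
  have hr0 : (0:ℝ) < r := Real.rpow_pos_of_pos two_pos _
  have h4 : (2:ℝ) ^ (2:ℝ) = 4 := by
    have := Real.rpow_natCast (2:ℝ) 2
    norm_num at this
    linarith
  have hr3 : (3:ℝ) ≤ r := by
    have := Real.rpow_le_rpow_of_exponent_le (one_le_two) hE2
    rw [h4] at this
    rw [hr_def]; linarith
  -- rewrite the radii
  have hlow : (2:ℝ) ^ ((j:ℝ) - 1) / (2:ℝ) ^ (((1 + 2*δ)/(2 + 2*δ)) * (j:ℝ)) = r := by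
    rw [← Real.rpow_sub two_pos, hr_def, hE_def]
    congr 1
    field_simp
    ring
  have hhigh : (2:ℝ) ^ ((j:ℝ) + 1) / (2:ℝ) ^ (((1 + 2*δ)/(2 + 2*δ)) * (j:ℝ)) = 4 * r := by
    rw [← Real.rpow_sub two_pos]
    have he : (j:ℝ) + 1 - (1 + 2*δ)/(2 + 2*δ) * (j:ℝ) = E + 2 := by
      rw [hE_def]; field_simp; ring
    rw [he, Real.rpow_add two_pos, h4, hr_def]; ring
  rw [hlow, hhigh]
  set A : Set (ℤ × ℤ) := {n : ℤ × ℤ | r ≤ ‖intVec n‖ ∧ ‖intVec n‖ ≤ 4 * r} with hA_def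
  set g : ℤ × ℤ → ℝ := fun n => ‖intVec n‖ ^ (-p) with hg_def
  have hg_nonneg : ∀ n, 0 ≤ g n := fun n => Real.rpow_nonneg (norm_nonneg _) _
  have hind_nonneg : ∀ n, 0 ≤ Set.indicator A g n :=
    fun n => Set.indicator_nonneg (fun m _ => hg_nonneg m) n
  have hA_sub : A ⊆ {n : ℤ × ℤ | n ≠ 0} := by
    intro n hn
    have hn1 : r ≤ ‖intVec n‖ := hn.1
    intro h0
    rw [h0] at hn1
    have hz : ‖intVec (0 : ℤ × ℤ)‖ = 0 := by rw [intVec_norm]; norm_num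
    rw [hz] at hn1
    linarith
  have hT_sum : Summable (fun n => Set.indicator A g n) := by
    refine hS.of_nonneg_of_le hind_nonneg (fun n => ?_)
    exact Set.indicator_le_indicator_of_subset hA_sub hg_nonneg n
  set T : ℝ := ∑' n : ℤ × ℤ, Set.indicator A g n with hT_def
  clear_value T
  -- norm positivity on A
  have hnormA : ∀ n ∈ A, (0:ℝ) < ‖intVec n‖ := fun n hn => lt_of_lt_of_le hr0 hn.1
  -- upper bound on T
  have hT_le : T ≤ 121 * (r ^ 2 * r ^ (-p)) := by
    set M : ℤ := ⌈4 * r⌉ with hM_def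
    have hM1 : (M:ℝ) ≤ 4*r + 1 := (Int.ceil_lt_add_one _).le
    have hM2 : 4*r ≤ (M:ℝ) := Int.le_ceil _
    set B : Finset (ℤ × ℤ) := Finset.Icc (-M) M ×ˢ Finset.Icc (-M) M with hB_def
    have hTeq : T = ∑ n ∈ B, Set.indicator A g n := by
      rw [hT_def]
      refine tsum_eq_sum (fun n hn => ?_)
      rw [Set.indicator_of_notMem]
      intro hnA
      apply hn
      rw [hB_def, Finset.mem_product, Finset.mem_Icc, Finset.mem_Icc]
      have h1 : |(n.1:ℝ)| ≤ (M:ℝ) := le_trans (le_trans (abs_fst_le n) hnA.2) hM2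
      have h2 : |(n.2:ℝ)| ≤ (M:ℝ) := le_trans (le_trans (abs_snd_le n) hnA.2) hM2
      have h1' : |n.1| ≤ M := by exact_mod_cast (by push_cast; exact h1 : ((|n.1| : ℤ) : ℝ) ≤ (M:ℝ))
      have h2' : |n.2| ≤ M := by exact_mod_cast (by push_cast; exact h2 : ((|n.2| : ℤ) : ℝ) ≤ (M:ℝ))
      rw [abs_le] at h1' h2'
      exact ⟨h1', h2'⟩
    have hterm : ∀ n ∈ B, Set.indicator A g n ≤ r ^ (-p) := by
      intro n _
      by_cases hn : n ∈ A
      · rw [Set.indicator_of_mem hn]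
        exact Real.rpow_le_rpow_of_nonpos hr0 hn.1 (by linarith)
      · rw [Set.indicator_of_notMem hn]; positivity
    have hsum := Finset.sum_le_card_nsmul B _ _ hterm
    rw [nsmul_eq_mul] at hsum
    have hcard : ((B.card : ℝ)) ≤ 121 * r ^ 2 := by
      have hc : B.card = ((2*M + 1).toNat) * ((2*M + 1).toNat) := by
        rw [hB_def, Finset.card_product, Int.card_Icc]
        congr 1 <;> · congr 1; ring
      have hMpos : (0:ℤ) ≤ 2*M + 1 := by
        have : (0:ℝ) < (M:ℝ) := by linarith
        have : (0:ℤ) < M := by exact_mod_cast this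
        omega
      have hcast : (((2*M + 1).toNat : ℕ) : ℝ) = 2*(M:ℝ) + 1 := by
        exact_mod_cast congrArg (Int.cast : ℤ → ℝ) (Int.toNat_of_nonneg hMpos)
      rw [hc, Nat.cast_mul, hcast]
      nlinarith [hr3, hM1, hM2, sq_nonneg (11*r - (2*(M:ℝ) + 1))]
    calc T = ∑ n ∈ B, Set.indicator A g n := hTeq
      _ ≤ (B.card : ℝ) * r ^ (-p) := hsum
      _ ≤ 121 * r ^ 2 * r ^ (-p) := by
          have : (0:ℝ) ≤ r ^ (-p) := by positivity
          nlinarith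
      _ = 121 * (r ^ 2 * r ^ (-p)) := by ring
  -- lower bound on T
  have hT_ge : (4:ℝ) ^ (-p) * (r ^ 2 * r ^ (-p)) ≤ T := by
    set N : ℤ := ⌈r⌉ with hN_def
    have hNr : r ≤ (N:ℝ) := Int.le_ceil _
    have hN1 : (N:ℝ) ≤ r + 1 := (Int.ceil_lt_add_one _).le
    have hNpos : (0:ℤ) < N := by
      have : (0:ℝ) < (N:ℝ) := by linarith
      exact_mod_cast this
    set s : Finset (ℤ × ℤ) := Finset.Icc N (2*N) ×ˢ Finset.Icc N (2*N) with hs_def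
    have hmem : ∀ n ∈ s, n ∈ A := by
      intro n hn
      rw [hs_def, Finset.mem_product, Finset.mem_Icc, Finset.mem_Icc] at hn
      obtain ⟨⟨ha1, ha2⟩, ⟨hb1, hb2⟩⟩ := hn
      have ha1c : (N:ℝ) ≤ (n.1:ℝ) := by exact_mod_cast ha1
      have ha2c : (n.1:ℝ) ≤ 2*(N:ℝ) := by exact_mod_cast ha2
      have hb1c : (N:ℝ) ≤ (n.2:ℝ) := by exact_mod_cast hb1
      have hb2c : (n.2:ℝ) ≤ 2*(N:ℝ) := by exact_mod_cast hb2
      have ha1' : r ≤ (n.1:ℝ) := by linarith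
      have ha2' : (n.1:ℝ) ≤ 2*r + 2 := by linarith
      have hb1' : r ≤ (n.2:ℝ) := by linarith
      have hb2' : (n.2:ℝ) ≤ 2*r + 2 := by linarith
      constructor
      · exact le_trans (le_trans ha1' (le_abs_self _)) (abs_fst_le n)
      · rw [intVec_norm]
        have hsq : (n.1:ℝ)^2 + (n.2:ℝ)^2 ≤ (4*r)^2 := by nlinarith
        calc Real.sqrt ((n.1:ℝ)^2 + (n.2:ℝ)^2) ≤ Real.sqrt ((4*r)^2) :=
              Real.sqrt_le_sqrt hsq
          _ = 4*r := Real.sqrt_sq (by positivity)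
    have hterm : ∀ n ∈ s, (4*r) ^ (-p) ≤ Set.indicator A g n := by
      intro n hn
      have hnA := hmem n hn
      rw [Set.indicator_of_mem hnA]
      exact Real.rpow_le_rpow_of_nonpos (hnormA n hnA) hnA.2 (by linarith)
    have hsum := Finset.card_nsmul_le_sum s _ _ hterm
    rw [nsmul_eq_mul] at hsum
    have hcard : r ^ 2 ≤ (s.card : ℝ) := by
      have hc : s.card = ((N + 1).toNat) * ((N + 1).toNat) := by
        rw [hs_def, Finset.card_product, Int.card_Icc]
        congr 1 <;> · congr 1; ring
      have hNpos' : (0:ℤ) ≤ N + 1 := by omega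
      have hcast : (((N + 1).toNat : ℕ) : ℝ) = (N:ℝ) + 1 := by
        exact_mod_cast congrArg (Int.cast : ℤ → ℝ) (Int.toNat_of_nonneg hNpos')
      rw [hc, Nat.cast_mul, hcast]
      nlinarith [hNr, hr0]
    have htsum : ∑ n ∈ s, Set.indicator A g n ≤ T := by
      rw [hT_def]
      exact Summable.sum_le_tsum s (fun n _ => hind_nonneg n) hT_sum
    have hmul : (4*r) ^ (-p) = (4:ℝ) ^ (-p) * r ^ (-p) :=
      Real.mul_rpow (by norm_num) hr0.le
    have h4p : (0:ℝ) ≤ (4*r) ^ (-p) := by positivity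
    calc (4:ℝ) ^ (-p) * (r ^ 2 * r ^ (-p)) = r ^ 2 * ((4*r) ^ (-p)) := by
          rw [hmul]; ring
      _ ≤ (s.card : ℝ) * ((4*r) ^ (-p)) := by nlinarith
      _ ≤ ∑ n ∈ s, Set.indicator A g n := hsum
      _ ≤ T := htsum
  -- key identity
  have hkey : r ^ 2 * r ^ (-p) = (2:ℝ) ^ ((2:ℝ) + 2*δ) * (2:ℝ) ^ (-(j:ℝ)) := by
    have h1 : r ^ 2 * r ^ (-p) = r ^ ((2:ℝ) + -p) := by
      rw [Real.rpow_add hr0]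
      congr 1
      rw [show ((2:ℝ)) = ((2:ℕ):ℝ) by norm_num, Real.rpow_natCast]
    rw [h1, hr_def, ← Real.rpow_mul (by norm_num : (0:ℝ) ≤ 2)]
    rw [← Real.rpow_add two_pos]
    congr 1
    rw [hE_def, hp_def]
    field_simp
    ring
  constructor
  · have h1 := mul_le_mul_of_nonneg_left hT_ge hSpos.le
    rw [hkey] at h1
    refine le_trans (le_of_eq (by ring)) h1
  · have h2 := mul_le_mul_of_nonneg_left hT_le hSpos.le
    rw [hkey] at h2
    refine le_trans h2 (le_of_eq (by ring))

end
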